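/- Let S be a finite nonempty set, κ a Markov kernel on S, and s₀ ∈ S. Then P_{s₀}-almost every trajectory ω : ℕ → S satisfies: for every k ∈ ℕ there exists N such that for all n ≥ N, the prefix ω_0 ⋯ ω_n is closed and m_{ω_0⋯ω_n} ≥ k. In particular, for any p_min ∈ (0,1), the confidence γ(ω_0⋯ω_n) := (1/(1−p_min))^{m_{ω_0⋯ω_n}} tends to infinity as n → ∞, P_{s₀}-almost surely. -/

import Mathlib

open MeasureTheory Filter

/-- The edge relation of the trace graph of the prefix `ω 0 ⋯ ω n`. -/
def traceEdge {S : Type*} (ω : ℕ → S) (n : ℕ) (a b : S) : Prop :=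
  ∃ i < n, ω i = a ∧ ω (i + 1) = b

/-- Reachability in the trace graph of the prefix `ω 0 ⋯ ω n`. -/
def traceReach {S : Type*} (ω : ℕ → S) (n : ℕ) : S → S → Prop :=
  Relation.ReflTransGen (traceEdge ω n)

/-- `#_π(a)` for the prefix `π = ω 0 ⋯ ω n`: the number of occurrences of `a`
among `ω 0, …, ω (n-1)`. -/
def traceCount {S : Type*} [DecidableEq S] (ω : ℕ → S) (n : ℕ) (a : S) : ℕ :=
  ((Finset.range n).filter (fun i => ω i = a)).card

/-- `m_π` for the prefix `π = ω 0 ⋯ ω n` of a trajectory: the minimum of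
`#_π(b)` over the states `b` of the mutual-reachability class of the last
state `ω n` in the trace graph of the prefix (for a closed prefix this class
is the unique bottom SCC of the trace graph). -/
noncomputable def traceM {S : Type*} [DecidableEq S] (ω : ℕ → S) (n : ℕ) : ℕ :=
  sInf (traceCount ω n '' {v | traceReach ω n (ω n) v ∧ traceReach ω n v (ω n)})

namespace AeConfAux

open Finset
open scoped ENNReal Classical Topology
set_option linter.unusedSectionVars false
set_option linter.unusedVariables false

variable {S : Type*} [Fintype S] [Nonempty S] [DecidableEq S]
    [MeasurableSpace S] [MeasurableSingletonClass S]

lemma measurableSet_coord (i : ℕ) (a : S) : MeasurableSet {ω : ℕ → S | ω i = a} :=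
  (measurable_pi_apply (X := fun _ : ℕ => S) i) (measurableSet_singleton a)

def Depends (n : ℕ) (A : Set (ℕ → S)) : Prop :=
  ∀ ⦃ω ω' : ℕ → S⦄, (∀ i ≤ n, ω i = ω' i) → ω ∈ A → ω' ∈ A

def res (n : ℕ) (ω : ℕ → S) : Fin (n + 1) → S := fun i => ω i

def ext (n : ℕ) (g : Fin (n + 1) → S) : ℕ → S :=
  fun i => if h : i < n + 1 then g ⟨i, h⟩ else g ⟨0, Nat.succ_pos n⟩

lemma ext_val (n : ℕ) (g : Fin (n + 1) → S) (i : Fin (n + 1)) : ext n g i = g i := by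
  simp [ext, i.isLt]

lemma ext_agree {n : ℕ} (ω : ℕ → S) {i : ℕ} (hi : i ≤ n) : ext n (res n ω) i = ω i := by
  simp [ext, res, Nat.lt_succ_of_le hi]

lemma measurableSet_of_depends {n : ℕ} {A : Set (ℕ → S)} (h : Depends n A) :
    MeasurableSet A := by
  have hres : Measurable (res (S := S) n) :=
    measurable_pi_lambda _ fun i => measurable_pi_apply _
  have hAeq : A = res n ⁻¹' (res n '' A) := by
    apply Set.Subset.antisymm (Set.subset_preimage_image _ _)
    rintro ω ⟨ω', hω', hre⟩
    refine h (fun i hi => ?_) hω'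
    have := congrFun hre ⟨i, Nat.lt_succ_of_le hi⟩
    exact this
  rw [hAeq]
  exact hres ((Set.toFinite _).countable.measurableSet)

def cyl (n : ℕ) (f : ℕ → S) : Set (ℕ → S) := {ω | ∀ i ≤ n, ω i = f i}

lemma depends_cyl (n : ℕ) (f : ℕ → S) : Depends n (cyl n f) :=
  fun ω ω' hag hω i hi => (hag i hi).symm.trans (hω i hi)

lemma measurableSet_cyl (n : ℕ) (f : ℕ → S) : MeasurableSet (cyl n f) :=
  measurableSet_of_depends (depends_cyl n f)

noncomputable def idx (n : ℕ) (A : Set (ℕ → S)) : Finset (Fin (n + 1) → S) :=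
  Finset.univ.filter (fun g => ext n g ∈ A)

lemma mem_idx {n : ℕ} {A : Set (ℕ → S)} {g : Fin (n + 1) → S} :
    g ∈ idx n A ↔ ext n g ∈ A := by
  simp [idx]

variable (κ : S → PMF S) (s₀ : S)

noncomputable def wt (n : ℕ) (f : ℕ → S) : ℝ≥0∞ :=
  (if f 0 = s₀ then 1 else 0) * ∏ i ∈ Finset.range n, κ (f i) (f (i + 1))

variable (P : Measure (ℕ → S))

/-- decompose an event depending on coordinates `≤ n` into exact cylinders -/
lemma event_eq_biUnion {n : ℕ} {A : Set (ℕ → S)} (hA : Depends n A) :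
    A = ⋃ g ∈ idx n A,
      cyl n (ext n g) := by
  ext ω
  constructor
  · intro hω
    have hmem : res n ω ∈ idx n A :=
      mem_idx.2 (hA (fun i hi => (ext_agree ω hi).symm) hω)
    have hcyl : ω ∈ cyl n (ext n (res n ω)) := fun i hi => (ext_agree ω hi).symm
    exact Set.mem_biUnion hmem hcyl
  · intro hω
    obtain ⟨g, hg, hcyl⟩ := Set.mem_iUnion₂.1 hω
    have hgA : ext n g ∈ A := mem_idx.1 hg
    exact hA (fun i hi => (hcyl i hi).symm) hgA

lemma pairwise_disjoint_cyl (n : ℕ) (T : Finset (Fin (n + 1) → S)) :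
    Set.PairwiseDisjoint (T : Set (Fin (n + 1) → S)) (fun g => cyl n (ext n g)) := by
  intro g _ g' _ hne
  refine Set.disjoint_left.2 fun ω hω hω' => hne ?_
  funext i
  have h1 : ω i = ext n g i := hω i (Nat.lt_succ_iff.1 i.isLt)
  have h2 : ω i = ext n g' i := hω' i (Nat.lt_succ_iff.1 i.isLt)
  rw [← ext_val n g i, ← ext_val n g' i, ← h1, ← h2]

lemma measure_eq_sum_cyl {n : ℕ} {A : Set (ℕ → S)} (hA : Depends n A) :
    P A = ∑ g ∈ idx n A,
      P (cyl n (ext n g)) := by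
  conv_lhs => rw [event_eq_biUnion hA]
  exact measure_biUnion_finset (pairwise_disjoint_cyl n _) (fun g _ => measurableSet_cyl n _)


lemma wt_update (n : ℕ) (f : ℕ → S) (s : S) :
    wt κ s₀ (n + 1) (Function.update f (n + 1) s) = wt κ s₀ n f * κ (f n) s := by
  have hval : ∀ i ≤ n, Function.update f (n + 1) s i = f i := fun i hi =>
    Function.update_of_ne (by omega) _ _
  unfold wt
  rw [Finset.prod_range_succ, hval 0 (Nat.zero_le n), hval n le_rfl, Function.update_self]
  have hprod : ∏ i ∈ Finset.range n,
      (κ (Function.update f (n+1) s i)) (Function.update f (n+1) s (i+1))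
      = ∏ i ∈ Finset.range n, (κ (f i)) (f (i+1)) := by
    refine Finset.prod_congr rfl fun i hi => ?_
    have hi' := Finset.mem_range.1 hi
    rw [hval i (le_of_lt hi'), hval (i+1) hi']
  rw [hprod]; ring

lemma sum_erase_eq (a b : S) :
    ∑ s ∈ Finset.univ.erase b, (κ a) s = 1 - (κ a) b := by
  have htot : ∑ s ∈ Finset.univ, (κ a) s = 1 := by
    rw [← tsum_fintype (L := .unconditional _)]; exact (κ a).tsum_coe
  have hadd := Finset.add_sum_erase Finset.univ (fun s => (κ a) s) (Finset.mem_univ b)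
  rw [htot] at hadd
  exact ENNReal.eq_sub_of_add_eq (PMF.apply_ne_top _ _) (by rw [add_comm]; exact hadd)

lemma cyl_inter_ne (hP : ∀ (k : ℕ) (f : ℕ → S), P (cyl k f) = wt κ s₀ k f)
    (n : ℕ) (f : ℕ → S) (b : S) :
    P (cyl n f ∩ {ω | ω (n+1) ≠ b}) = (1 - κ (f n) b) * P (cyl n f) := by
  have hset : cyl n f ∩ {ω | ω (n+1) ≠ b}
      = ⋃ s ∈ Finset.univ.erase b, cyl (n+1) (Function.update f (n+1) s) := by
    ext ω
    constructor
    · rintro ⟨h1, h2⟩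
      refine Set.mem_biUnion (Finset.mem_erase.2 ⟨h2, Finset.mem_univ _⟩) ?_
      intro i hi
      rcases Nat.lt_succ_iff_lt_or_eq.1 (Nat.lt_succ_of_le hi) with hlt | heq
      · rw [Function.update_of_ne (by omega), h1 i (by omega)]
      · subst heq; rw [Function.update_self]
    · intro hω
      obtain ⟨s, hs, hcyl⟩ := Set.mem_iUnion₂.1 hω
      have hsb := (Finset.mem_erase.1 hs).1
      constructor
      · intro i hi
        have := hcyl i (by omega)
        rwa [Function.update_of_ne (by omega)] at this
      · have := hcyl (n+1) le_rfl
        rw [Function.update_self] at this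
        exact fun hc => hsb (this.symm.trans hc)
  rw [hset, measure_biUnion_finset ?disj (fun s _ => measurableSet_cyl _ _)]
  case disj =>
    intro s hs s' hs' hne
    refine Set.disjoint_left.2 fun ω hω hω' => hne ?_
    have h1 := hω (n+1) le_rfl
    have h2 := hω' (n+1) le_rfl
    rw [Function.update_self] at h1 h2
    rw [← h1, ← h2]
  have hterm : ∀ s ∈ Finset.univ.erase b,
      P (cyl (n+1) (Function.update f (n+1) s)) = P (cyl n f) * (κ (f n)) s := by
    intro s _
    rw [hP (n+1) _, wt_update, hP n f]
  rw [Finset.sum_congr rfl hterm, ← Finset.mul_sum, sum_erase_eq, mul_comm]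

lemma measure_inter_ne_eq (hP : ∀ (k : ℕ) (f : ℕ → S), P (cyl k f) = wt κ s₀ k f)
    {n : ℕ} {A : Set (ℕ → S)} (hA : Depends n A) {a : S}
    (hAa : ∀ ω ∈ A, ω n = a) (b : S) :
    P (A ∩ {ω | ω (n + 1) ≠ b}) = (1 - κ a b) * P A := by
  classical
  set T := idx n A with hT
  set F : (Fin (n + 1) → S) → Set (ℕ → S) :=
    fun g => cyl n (ext n g) ∩ {ω | ω (n+1) ≠ b} with hF
  have hsplit : A ∩ {ω | ω (n+1) ≠ b} = ⋃ g ∈ T, F g := by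
    conv_lhs => rw [event_eq_biUnion hA]
    simp only [hF, Set.iUnion_inter, hT]
  have hdisj : Set.PairwiseDisjoint (T : Set (Fin (n + 1) → S)) F := by
    intro g hg g' hg' hne
    exact Disjoint.mono Set.inter_subset_left Set.inter_subset_left
      (pairwise_disjoint_cyl n T hg hg' hne)
  have hmeas : ∀ g ∈ T, MeasurableSet (F g) :=
    fun g _ => (measurableSet_cyl n _).inter ((measurableSet_coord (n+1) b).compl)
  rw [hsplit, measure_biUnion_finset hdisj hmeas]
  have hterm : ∀ g ∈ T, P (F g) = (1 - κ a b) * P (cyl n (ext n g)) := by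
    intro g hg
    have hga : ext n g n = a := hAa _ (mem_idx.1 hg)
    rw [hF]
    rw [cyl_inter_ne κ s₀ P hP n _ b, hga]
  rw [Finset.sum_congr rfl hterm, ← Finset.mul_sum, ← measure_eq_sum_cyl P hA]

lemma measure_pair_zero (hP : ∀ (k : ℕ) (f : ℕ → S), P (cyl k f) = wt κ s₀ k f)
    {x y : S} (h : (κ x) y = 0) (j : ℕ) :
    P {ω : ℕ → S | ω j = x ∧ ω (j + 1) = y} = 0 := by
  have hA : Depends (j+1) {ω : ℕ → S | ω j = x ∧ ω (j+1) = y} := by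
    intro ω ω' hag hω
    exact ⟨(hag j (by omega)) ▸ hω.1, (hag (j+1) le_rfl) ▸ hω.2⟩
  rw [measure_eq_sum_cyl P hA]
  apply Finset.sum_eq_zero
  intro g hg
  obtain ⟨hgx, hgy⟩ := mem_idx.1 hg
  rw [hP (j+1) (ext (j+1) g)]
  unfold wt
  have hz : ∏ i ∈ Finset.range (j+1), (κ (ext (j+1) g i)) (ext (j+1) g (i+1)) = 0 :=
    Finset.prod_eq_zero (Finset.self_mem_range_succ j) (by rw [hgx, hgy]; exact h)
  rw [hz, mul_zero]


/-! ### The failure-count events -/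

def cnt (a : S) (N t : ℕ) (ω : ℕ → S) : ℕ :=
  ((Finset.Ico N (N + t)).filter (fun i => ω i = a)).card

lemma cnt_mono (a : S) (N : ℕ) (ω : ℕ → S) {t t' : ℕ} (h : t ≤ t') :
    cnt a N t ω ≤ cnt a N t' ω :=
  Finset.card_le_card
    (Finset.filter_subset_filter _ (Finset.Ico_subset_Ico le_rfl (by omega)))

def win (a b : S) (N t m : ℕ) : Set (ℕ → S) :=
  {ω | cnt a N t ω = m ∧ ∀ i ∈ Finset.Ico N (N + t), ω i = a → ω (i + 1) ≠ b}

lemma depends_win (a b : S) (N t m : ℕ) : Depends (N + t) (win a b N t m) := by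
  intro ω ω' hag hω
  obtain ⟨h1, h2⟩ := hω
  have key : ∀ i ∈ Finset.Ico N (N + t), ω i = ω' i := fun i hi =>
    hag i (le_of_lt (Finset.mem_Ico.1 hi).2)
  constructor
  · rw [← h1]
    unfold cnt
    congr 1
    apply Finset.filter_congr
    intro i hi
    rw [key i hi]
  · intro i hi hia
    have hi2 := (Finset.mem_Ico.1 hi).2
    have e2 := hag (i + 1) hi2
    rw [← e2]
    exact h2 i hi (by rw [key i hi]; exact hia)

lemma Ico_succ_insert (N t : ℕ) :
    Finset.Ico N (N + t + 1) = insert (N + t) (Finset.Ico N (N + t)) := by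
  ext i
  simp only [Finset.mem_Ico, Finset.mem_insert]
  omega

lemma cnt_succ (a : S) (N t : ℕ) (ω : ℕ → S) :
    cnt a N (t + 1) ω = cnt a N t ω + (if ω (N + t) = a then 1 else 0) := by
  unfold cnt
  rw [show N + (t + 1) = N + t + 1 from rfl, Ico_succ_insert, Finset.filter_insert]
  by_cases h : ω (N + t) = a
  · rw [if_pos h, if_pos h,
      Finset.card_insert_of_notMem (by simp [Finset.mem_Ico]), add_comm]
  · rw [if_neg h, if_neg h, add_zero]

lemma win_succ_subset (a b : S) (N t m : ℕ) :
    win a b N (t + 1) (m + 1) ⊆ (win a b N t (m + 1) \ {ω | ω (N + t) = a}) ∪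
      ((win a b N t m ∩ {ω | ω (N + t) = a}) ∩ {ω | ω (N + t + 1) ≠ b}) := by
  intro ω hω
  obtain ⟨h1, h2⟩ := hω
  have hcnt := cnt_succ a N t ω
  have hIco := Ico_succ_insert N t
  have h2' : ∀ i ∈ Finset.Ico N (N + t), ω i = a → ω (i + 1) ≠ b := fun i hi =>
    h2 i (by rw [show N + (t+1) = N + t + 1 from rfl, hIco]; exact Finset.mem_insert_of_mem hi)
  by_cases h : ω (N + t) = a
  · right
    rw [hcnt, if_pos h] at h1
    refine ⟨⟨⟨by omega, h2'⟩, h⟩, ?_⟩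
    exact h2 (N + t)
      (by rw [show N + (t+1) = N + t + 1 from rfl, hIco]; exact Finset.mem_insert_self _ _) h
  · left
    rw [hcnt, if_neg h, add_zero] at h1
    exact ⟨⟨h1, h2'⟩, h⟩

lemma win_succ_subset_zero (a b : S) (N t : ℕ) :
    win a b N (t + 1) 0 ⊆ win a b N t 0 \ {ω | ω (N + t) = a} := by
  intro ω hω
  obtain ⟨h1, h2⟩ := hω
  have hcnt := cnt_succ a N t ω
  have hIco := Ico_succ_insert N t
  have h2' : ∀ i ∈ Finset.Ico N (N + t), ω i = a → ω (i + 1) ≠ b := fun i hi =>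
    h2 i (by rw [show N + (t+1) = N + t + 1 from rfl, hIco]; exact Finset.mem_insert_of_mem hi)
  by_cases h : ω (N + t) = a
  · rw [hcnt, if_pos h] at h1; omega
  · rw [hcnt, if_neg h, add_zero] at h1
    exact ⟨⟨h1, h2'⟩, h⟩

lemma win_pot [IsProbabilityMeasure P] (hP : ∀ (k : ℕ) (f : ℕ → S), P (cyl k f) = wt κ s₀ k f)
    (a b : S) (N t M : ℕ) :
    ∑ m ∈ Finset.range (M + 1), (1 - κ a b) ^ (M - m) * P (win a b N t m)
      ≤ (1 - κ a b) ^ M := by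
  induction t with
  | zero =>
    have hval : ∀ m : ℕ, P (win a b N 0 m) = if m = 0 then 1 else 0 := by
      intro m
      by_cases h : m = 0
      · subst h
        rw [if_pos rfl]
        have huniv : win a b N 0 0 = Set.univ := by
          ext ω
          simp [win, cnt]
        rw [huniv]
        exact measure_univ
      · rw [if_neg h]
        have hemp : win a b N 0 m = ∅ := by
          ext ω
          simp only [win, cnt, Nat.add_zero, Finset.Ico_self, Finset.filter_empty,
            Finset.card_empty, Set.mem_setOf_eq, Set.mem_empty_iff_false, iff_false,
            not_and]
          intro h0
          exact absurd h0.symm h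
        rw [hemp]
        exact measure_empty
    calc ∑ m ∈ Finset.range (M + 1), (1 - κ a b) ^ (M - m) * P (win a b N 0 m)
        = (1 - κ a b) ^ (M - 0) * P (win a b N 0 0) := by
          refine Finset.sum_eq_single_of_mem 0 (Finset.mem_range.2 (Nat.succ_pos M)) ?_
          intro m _ hm
          rw [hval m, if_neg hm, mul_zero]
      _ ≤ (1 - κ a b) ^ M := by
          rw [hval 0, if_pos rfl, mul_one, Nat.sub_zero]
  | succ t ih =>
    set c := 1 - κ a b with hc
    set E := {ω : ℕ → S | ω (N + t) = a} with hE
    have h0 : P (win a b N (t + 1) 0) ≤ P (win a b N t 0 \ E) :=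
      measure_mono (win_succ_subset_zero a b N t)
    have hstep : ∀ m : ℕ, P (win a b N (t + 1) (m + 1))
        ≤ P (win a b N t (m + 1) \ E) + c * P (win a b N t m ∩ E) := by
      intro m
      refine le_trans (measure_mono (win_succ_subset a b N t m)) ?_
      refine le_trans (measure_union_le _ _) ?_
      have heq : P ((win a b N t m ∩ E) ∩ {ω | ω ((N + t) + 1) ≠ b})
          = c * P (win a b N t m ∩ E) := by
        refine measure_inter_ne_eq κ s₀ P hP (n := N + t) ?_ ?_ b
        · intro ω ω' hag hω
          refine ⟨depends_win a b N t m hag hω.1, ?_⟩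
          have h2 := hω.2
          simp only [hE, Set.mem_setOf_eq] at h2 ⊢
          rw [← hag (N + t) le_rfl]
          exact h2
        · exact fun ω hω => hω.2
      rw [← heq]
    calc ∑ m ∈ Finset.range (M + 1), c ^ (M - m) * P (win a b N (t + 1) m)
        = (∑ m ∈ Finset.range M, c ^ (M - (m + 1)) * P (win a b N (t + 1) (m + 1)))
            + c ^ (M - 0) * P (win a b N (t + 1) 0) :=
          Finset.sum_range_succ' _ M
      _ ≤ (∑ m ∈ Finset.range M,
              c ^ (M - (m + 1)) * (P (win a b N t (m + 1) \ E) + c * P (win a b N t m ∩ E)))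
            + c ^ (M - 0) * P (win a b N t 0 \ E) := by
          refine add_le_add (Finset.sum_le_sum fun m _ => ?_) (mul_le_mul_right h0 _)
          exact mul_le_mul_right (hstep m) _
      _ = ((∑ m ∈ Finset.range M, c ^ (M - (m + 1)) * P (win a b N t (m + 1) \ E))
            + c ^ (M - 0) * P (win a b N t 0 \ E))
            + ∑ m ∈ Finset.range M, c ^ (M - (m + 1)) * (c * P (win a b N t m ∩ E)) := by
          simp only [mul_add, Finset.sum_add_distrib]
          ring
      _ = (∑ m ∈ Finset.range (M + 1), c ^ (M - m) * P (win a b N t m \ E))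
            + ∑ m ∈ Finset.range M, c ^ (M - m) * P (win a b N t m ∩ E) := by
          rw [← Finset.sum_range_succ' (fun m => c ^ (M - m) * P (win a b N t m \ E)) M]
          congr 1
          refine Finset.sum_congr rfl fun m hm => ?_
          have hmM := Finset.mem_range.1 hm
          rw [← mul_assoc, ← pow_succ, show M - (m + 1) + 1 = M - m by omega]
      _ ≤ (∑ m ∈ Finset.range (M + 1), c ^ (M - m) * P (win a b N t m \ E))
            + ∑ m ∈ Finset.range (M + 1), c ^ (M - m) * P (win a b N t m ∩ E) := by
          refine add_le_add_right ?_ _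
          exact Finset.sum_le_sum_of_subset (Finset.range_subset_range.2 (Nat.le_succ M))
      _ = ∑ m ∈ Finset.range (M + 1), c ^ (M - m) * P (win a b N t m) := by
          rw [← Finset.sum_add_distrib]
          refine Finset.sum_congr rfl fun m _ => ?_
          rw [← mul_add, add_comm, measure_inter_add_diff _ (measurableSet_coord (N + t) a)]
      _ ≤ c ^ M := ih

lemma win_le [IsProbabilityMeasure P] (hP : ∀ (k : ℕ) (f : ℕ → S), P (cyl k f) = wt κ s₀ k f)
    (a b : S) (N t m : ℕ) :
    P (win a b N t m) ≤ (1 - κ a b) ^ m := by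
  have h := win_pot κ s₀ P hP a b N t m
  have h2 : (1 - κ a b) ^ (m - m) * P (win a b N t m)
      ≤ ∑ j ∈ Finset.range (m + 1), (1 - κ a b) ^ (m - j) * P (win a b N t j) :=
    Finset.single_le_sum (f := fun j => (1 - κ a b) ^ (m - j) * P (win a b N t j))
      (fun i _ => zero_le) (Finset.self_mem_range_succ m)
  rw [Nat.sub_self, pow_zero, one_mul] at h2
  exact le_trans h2 h

def winGe (a b : S) (N t m : ℕ) : Set (ℕ → S) :=
  {ω | m ≤ cnt a N t ω ∧ ∀ i ∈ Finset.Ico N (N + t), ω i = a → ω (i + 1) ≠ b}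

lemma winGe_le [IsProbabilityMeasure P] (hP : ∀ (k : ℕ) (f : ℕ → S), P (cyl k f) = wt κ s₀ k f)
    (a b : S) (N : ℕ) (hb1 : (κ a) b ≤ 1) (t m : ℕ) :
    P (winGe a b N t m) ≤ (1 - κ a b) ^ m * ((κ a) b)⁻¹ := by
  set c := 1 - κ a b with hc
  have hsub : winGe a b N t m ⊆ ⋃ j ∈ Finset.Ico m (t + 1), win a b N t j := by
    intro ω hω
    have hle : cnt a N t ω ≤ t :=
      le_trans (Finset.card_filter_le _ _) (by rw [Nat.card_Ico]; omega)
    exact Set.mem_biUnion (Finset.mem_Ico.2 ⟨hω.1, by omega⟩) ⟨rfl, hω.2⟩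
  refine le_trans (measure_mono hsub) ?_
  refine le_trans (measure_biUnion_finset_le _ _) ?_
  refine le_trans (Finset.sum_le_sum fun j _ => win_le κ s₀ P hP a b N t j) ?_
  rw [Finset.sum_Ico_eq_sum_range]
  rw [Finset.sum_congr rfl (fun i _ => pow_add c m i), ← Finset.mul_sum]
  refine mul_le_mul_right ?_ _
  refine le_trans (ENNReal.sum_le_tsum _) ?_
  rw [ENNReal.tsum_geometric, hc, ENNReal.sub_sub_cancel ENNReal.one_ne_top hb1]

def badN (a b : S) (N : ℕ) : Set (ℕ → S) :=
  {ω | (∀ M, ∃ n ≥ M, ω n = a) ∧ ∀ i, N ≤ i → ¬(ω i = a ∧ ω (i + 1) = b)}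

lemma cnt_unbounded (a : S) (N : ℕ) {ω : ℕ → S}
    (hio : ∀ M, ∃ n ≥ M, ω n = a) (m : ℕ) : ∃ t, m ≤ cnt a N t ω := by
  induction m with
  | zero => exact ⟨0, Nat.zero_le _⟩
  | succ m ih =>
    obtain ⟨t, ht⟩ := ih
    obtain ⟨n, hn, hna⟩ := hio (N + t)
    refine ⟨n + 1 - N, ?_⟩
    have hN : N ≤ n := le_trans (Nat.le_add_right N t) hn
    have hIco : N + (n + 1 - N) = n + 1 := by omega
    have hsub : insert n ((Finset.Ico N (N + t)).filter (fun i => ω i = a))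
        ⊆ (Finset.Ico N (n + 1)).filter (fun i => ω i = a) := by
      intro i hi
      rcases Finset.mem_insert.1 hi with rfl | hi
      · exact Finset.mem_filter.2 ⟨Finset.mem_Ico.2 ⟨hN, by omega⟩, hna⟩
      · obtain ⟨hi1, hi2⟩ := Finset.mem_filter.1 hi
        obtain ⟨h1', h2'⟩ := Finset.mem_Ico.1 hi1
        exact Finset.mem_filter.2 ⟨Finset.mem_Ico.2 ⟨h1', by omega⟩, hi2⟩
    have hnm : n ∉ (Finset.Ico N (N + t)).filter (fun i => ω i = a) := by
      intro hmem
      have := (Finset.mem_Ico.1 (Finset.mem_filter.1 hmem).1).2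
      omega
    have hcard := Finset.card_le_card hsub
    rw [Finset.card_insert_of_notMem hnm] at hcard
    unfold cnt
    rw [hIco]
    unfold cnt at ht
    omega

lemma badN_null [IsProbabilityMeasure P] (hP : ∀ (k : ℕ) (f : ℕ → S), P (cyl k f) = wt κ s₀ k f)
    (a b : S) (hab : (κ a) b ≠ 0) (N : ℕ) : P (badN a b N) = 0 := by
  have hb1 : (κ a) b ≤ 1 := PMF.coe_le_one _ _
  have key : ∀ m : ℕ, P (badN a b N) ≤ (1 - κ a b) ^ m * ((κ a) b)⁻¹ := by
    intro m
    have hun : badN a b N = ⋃ t, (badN a b N ∩ {ω | m ≤ cnt a N t ω}) := by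
      ext ω
      constructor
      · intro hω
        obtain ⟨t, ht⟩ := cnt_unbounded a N hω.1 m
        exact Set.mem_iUnion.2 ⟨t, hω, ht⟩
      · intro hω
        obtain ⟨t, h1, _⟩ := Set.mem_iUnion.1 hω
        exact h1
    have hmono : Monotone (fun t => badN a b N ∩ {ω | m ≤ cnt a N t ω}) := by
      intro t t' htt
      refine Set.inter_subset_inter_right _ fun ω hω => ?_
      exact le_trans hω (cnt_mono a N ω htt)
    rw [hun, hmono.measure_iUnion]
    refine iSup_le fun t => ?_
    refine le_trans (measure_mono ?_) (winGe_le κ s₀ P hP a b N hb1 t m)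
    rintro ω ⟨⟨hio, htail⟩, hcnt⟩
    refine ⟨hcnt, fun i hi hia hib => ?_⟩
    exact htail i (Finset.mem_Ico.1 hi).1 ⟨hia, hib⟩
  have hc1 : (1 - κ a b) < 1 := ENNReal.sub_lt_self ENNReal.one_ne_top one_ne_zero hab
  have htend : Tendsto (fun m : ℕ => (1 - κ a b) ^ m * ((κ a) b)⁻¹) atTop (𝓝 0) := by
    have h0 : Tendsto (fun m : ℕ => (1 - κ a b) ^ m) atTop (𝓝 0) :=
      ENNReal.tendsto_pow_atTop_nhds_zero_of_lt_one hc1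
    have := ENNReal.Tendsto.mul_const h0 (Or.inr (ENNReal.inv_ne_top.2 hab))
    simpa using this
  exact le_antisymm (ge_of_tendsto htend (Eventually.of_forall key)) zero_le


def bad (a b : S) : Set (ℕ → S) :=
  {ω | (∀ M, ∃ n ≥ M, ω n = a) ∧ ∃ N, ∀ i, N ≤ i → ¬(ω i = a ∧ ω (i + 1) = b)}

lemma bad_null [IsProbabilityMeasure P]
    (hP : ∀ (k : ℕ) (f : ℕ → S), P (cyl k f) = wt κ s₀ k f)
    (a b : S) (hab : (κ a) b ≠ 0) : P (bad a b) = 0 := by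
  refine measure_mono_null (fun ω hω => ?_)
    (measure_iUnion_null fun N => badN_null κ s₀ P hP a b hab N)
  obtain ⟨h1, N, h2⟩ := hω
  exact Set.mem_iUnion.2 ⟨N, h1, h2⟩

lemma Z1_null (hP : ∀ (k : ℕ) (f : ℕ → S), P (cyl k f) = wt κ s₀ k f) :
    P {ω : ℕ → S | ∃ j, (κ (ω j)) (ω (j + 1)) = 0} = 0 := by
  have hsub : {ω : ℕ → S | ∃ j, (κ (ω j)) (ω (j + 1)) = 0}
      ⊆ ⋃ (j : ℕ) (x : S) (y : S),
          {ω : ℕ → S | ω j = x ∧ ω (j + 1) = y ∧ (κ x) y = 0} := by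
    rintro ω ⟨j, hj⟩
    exact Set.mem_iUnion.2 ⟨j, Set.mem_iUnion.2 ⟨ω j,
      Set.mem_iUnion.2 ⟨ω (j + 1), rfl, rfl, hj⟩⟩⟩
  refine measure_mono_null hsub ?_
  refine measure_iUnion_null fun j => measure_iUnion_null fun x =>
    measure_iUnion_null fun y => ?_
  by_cases h : (κ x) y = 0
  · refine measure_mono_null ?_ (measure_pair_zero κ s₀ P hP h j)
    exact fun ω hω => ⟨hω.1, hω.2.1⟩
  · refine measure_mono_null (t := (∅ : Set (ℕ → S))) (fun ω hω => (h hω.2.2).elim)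
      measure_empty

lemma deterministic (κ : S → PMF S) (ω : ℕ → S)
    (h1 : ∀ j, (κ (ω j)) (ω (j + 1)) ≠ 0)
    (h2 : ∀ a b : S, (κ a) b ≠ 0 → ω ∉ bad a b) :
    ∀ k : ℕ, ∃ N, ∀ n ≥ N, (∃ i < n, ω i = ω n) ∧ k ≤ traceM ω n := by
  classical
  have hAB : ∀ a b : S, (κ a) b ≠ 0 → (∀ M, ∃ j ≥ M, ω j = a) →
      ∀ N, ∃ i, N ≤ i ∧ ω i = a ∧ ω (i + 1) = b := by
    intro a b hab hInf N
    by_contra hc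
    exact h2 a b hab ⟨hInf, N, fun i hi hpair => hc ⟨i, hi, hpair⟩⟩
  have claimA : ∀ x y : S, (∀ M, ∃ j ≥ M, ω j = x) →
      (∃ i, ω i = x ∧ ω (i + 1) = y) → (∀ M, ∃ j ≥ M, ω j = y) := by
    rintro x y hx ⟨i, hix, hiy⟩
    have hκ : (κ x) y ≠ 0 := by rw [← hix, ← hiy]; exact h1 i
    intro M
    obtain ⟨j, hjM, hj⟩ := hAB x y hκ hx M
    exact ⟨j + 1, by omega, hj.2⟩
  have hGex : ∀ s : S, ∃ Ms, ¬ (∀ M, ∃ j ≥ M, ω j = s) → ∀ n ≥ Ms, ω n ≠ s := by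
    intro s
    by_cases h : ∀ M, ∃ j ≥ M, ω j = s
    · exact ⟨0, fun hn => absurd h hn⟩
    · push_neg at h
      obtain ⟨M, hM⟩ := h
      exact ⟨M, fun _ => hM⟩
  choose G hG using hGex
  have hN1 : ∀ n, Finset.univ.sup G ≤ n → ∀ M, ∃ j ≥ M, ω j = ω n := by
    intro n hn
    by_contra hni
    exact hG (ω n) hni n (le_trans (Finset.le_sup (Finset.mem_univ (ω n))) hn) rfl
  have hocc0 : ∀ s : S, ∃ i, (∀ M, ∃ j ≥ M, ω j = s) → ω i = s := by
    intro s
    by_cases h : ∀ M, ∃ j ≥ M, ω j = s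
    · obtain ⟨i, _, hi⟩ := h 0
      exact ⟨i, fun _ => hi⟩
    · exact ⟨0, fun hs => absurd hs h⟩
  choose occ hocc using hocc0
  have hcount : ∀ s : S, (∀ M, ∃ j ≥ M, ω j = s) →
      ∀ k : ℕ, ∃ N, ∀ n, N ≤ n → k ≤ traceCount ω n s := by
    intro s hs k
    induction k with
    | zero => exact ⟨0, fun n _ => Nat.zero_le _⟩
    | succ k ih =>
      obtain ⟨N, hN⟩ := ih
      obtain ⟨i, hiN, hi⟩ := hs N
      refine ⟨i + 1, fun n hn => ?_⟩
      have hmono : traceCount ω (i + 1) s ≤ traceCount ω n s :=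
        Finset.card_le_card (Finset.filter_subset_filter _ (Finset.range_subset_range.2 hn))
      have hsucc : traceCount ω i s + 1 ≤ traceCount ω (i + 1) s := by
        unfold traceCount
        rw [Finset.range_add_one, Finset.filter_insert, if_pos hi,
          Finset.card_insert_of_notMem (by simp)]
      have hki : k ≤ traceCount ω i s := hN i hiN
      omega
  intro k
  have hNsex : ∀ s : S, ∃ Nk, (∀ M, ∃ j ≥ M, ω j = s) →
      ∀ n, Nk ≤ n → k ≤ traceCount ω n s := by
    intro s
    by_cases h : ∀ M, ∃ j ≥ M, ω j = s
    · obtain ⟨N, hN⟩ := hcount s h k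
      exact ⟨N, fun _ => hN⟩
    · exact ⟨0, fun hs => absurd hs h⟩
  choose Ns hNs using hNsex
  refine ⟨max (max (Finset.univ.sup G) (Finset.univ.sup occ + 1))
    (Finset.univ.sup Ns), fun n hn => ?_⟩
  have hnN1 : Finset.univ.sup G ≤ n :=
    le_trans (le_trans (le_max_left _ _) (le_max_left _ _)) hn
  have hInfn : ∀ M, ∃ j ≥ M, ω j = ω n := hN1 n hnN1
  constructor
  · refine ⟨occ (ω n), ?_, hocc (ω n) hInfn⟩
    have ho1 : occ (ω n) ≤ Finset.univ.sup occ := Finset.le_sup (Finset.mem_univ _)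
    have ho2 : Finset.univ.sup occ + 1 ≤ n :=
      le_trans (le_trans (le_max_right _ _) (le_max_left _ _)) hn
    omega
  · have hclass : ∀ v, traceReach ω n (ω n) v → (∀ M, ∃ j ≥ M, ω j = v) := by
      intro v hv
      induction hv with
      | refl => exact hInfn
      | tail hxy hedge ih =>
        obtain ⟨i, hin, hix, hiy⟩ := hedge
        exact claimA _ _ ih ⟨i, hix, hiy⟩
    refine le_csInf ⟨traceCount ω n (ω n), Set.mem_image_of_mem _
      ⟨Relation.ReflTransGen.refl, Relation.ReflTransGen.refl⟩⟩ ?_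
    rintro x ⟨v, ⟨hv1, _⟩, rfl⟩
    refine hNs v (hclass v hv1) n ?_
    exact le_trans (le_trans (Finset.le_sup (Finset.mem_univ v)) (le_max_right _ _)) hn

end AeConfAux

/-- Let `S` be a finite nonempty set, `κ` a Markov kernel on
`S`, `s₀ ∈ S`, and let `P` be the law on trajectory space of the Markov chain
started at `s₀` with kernel `κ` (characterized by its values on cylinders).
Then `P`-almost every trajectory `ω` satisfies: for every `k` all sufficiently
long prefixes `ω 0 ⋯ ω n` are closed and have `m_{ω 0 ⋯ ω n} ≥ k`; in
particular, for any `p_min ∈ (0,1)` the confidence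
`γ(ω 0 ⋯ ω n) = (1 / (1 - p_min)) ^ m_{ω 0 ⋯ ω n}` tends to infinity. -/
theorem ae_confidence_tendsto_atTop {S : Type*} [Fintype S] [Nonempty S] [DecidableEq S]
    [MeasurableSpace S] [MeasurableSingletonClass S]
    (κ : S → PMF S) (s₀ : S)
    (P : Measure (ℕ → S)) [IsProbabilityMeasure P]
    (hP : ∀ (k : ℕ) (f : ℕ → S),
      P {ω | ∀ i ≤ k, ω i = f i} =
        (if f 0 = s₀ then 1 else 0) * ∏ i ∈ Finset.range k, κ (f i) (f (i + 1))) :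
    ∀ᵐ ω ∂P,
      (∀ k : ℕ, ∃ N, ∀ n ≥ N, (∃ i < n, ω i = ω n) ∧ k ≤ traceM ω n) ∧
      ∀ pmin : ℝ, 0 < pmin → pmin < 1 →
        Tendsto (fun n => (1 / (1 - pmin)) ^ traceM ω n) atTop atTop := by
  classical
  have hP' : ∀ (k : ℕ) (f : ℕ → S), P (AeConfAux.cyl k f) = AeConfAux.wt κ s₀ k f := hP
  set Z : Set (ℕ → S) :=
    {ω | ∃ j, (κ (ω j)) (ω (j + 1)) = 0} ∪
      ⋃ (a : S) (b : S), {ω | (κ a) b ≠ 0 ∧ ω ∈ AeConfAux.bad a b} with hZ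
  have hZnull : P Z = 0 := by
    rw [hZ]
    refine measure_union_null (AeConfAux.Z1_null κ s₀ P hP') ?_
    refine measure_iUnion_null fun a => measure_iUnion_null fun b => ?_
    by_cases h : (κ a) b = 0
    · exact measure_mono_null (t := (∅ : Set (ℕ → S))) (fun ω hω => (hω.1 h).elim)
        measure_empty
    · exact measure_mono_null (fun ω hω => hω.2) (AeConfAux.bad_null κ s₀ P hP' a b h)
  rw [ae_iff]
  refine measure_mono_null (fun ω hω => ?_) hZnull
  simp only [Set.mem_setOf_eq] at hω
  by_contra hωZ
  apply hω
  have h1 : ∀ j, (κ (ω j)) (ω (j + 1)) ≠ 0 := by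
    intro j hj
    exact hωZ (Set.mem_union_left _ ⟨j, hj⟩)
  have h2 : ∀ a b : S, (κ a) b ≠ 0 → ω ∉ AeConfAux.bad a b := by
    intro a b hab hbad
    exact hωZ (Set.mem_union_right _
      (Set.mem_iUnion.2 ⟨a, Set.mem_iUnion.2 ⟨b, hab, hbad⟩⟩))
  have hmain := AeConfAux.deterministic κ ω h1 h2
  refine ⟨hmain, ?_⟩
  have htm : Tendsto (fun n => traceM ω n) atTop atTop := by
    rw [tendsto_atTop_atTop]
    intro K
    obtain ⟨N, hN⟩ := hmain K
    exact ⟨N, fun n hn => (hN n hn).2⟩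
  intro pmin hp0 hp1
  have hone : (1 : ℝ) < 1 / (1 - pmin) := one_lt_one_div (by linarith) (by linarith)
  exact (tendsto_pow_atTop_atTop_of_one_lt hone).comp htm
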